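/- Let R be a commutative ring and S a multiplicative subset of R. If I is an S-prime ideal of R with I ∩ S = ∅, then the ideal S⁻¹I generated by the image of I in the localization S⁻¹R (i.e., the pushforward of I along the canonical map R → S⁻¹R) is a prime ideal of S⁻¹R. -/

import Mathlib

/-- If `I` is an `S`-prime ideal of `R` disjoint from `S`, then `S⁻¹I` is a prime ideal
of the localization `S⁻¹R`. -/
theorem stmt_7 {R : Type*} [CommRing R] (S : Submonoid R) (I : Ideal R)
    (hdisj : (I : Set R) ∩ (S : Set R) = ∅)
    (hSprime : ∃ s ∈ S, ∀ x y : R, x * y ∈ I → s * x ∈ I ∨ s * y ∈ I) :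
    (I.map (algebraMap R (Localization S))).IsPrime := by
  obtain ⟨s, hs, hP⟩ := hSprime
  have hdisj' : ∀ x, x ∈ I → x ∈ S → False := by
    intro x hxI hxS
    have : x ∈ (I : Set R) ∩ (S : Set R) := ⟨hxI, hxS⟩
    simp [hdisj] at this
  -- a helper: if x ∈ I and t : S, then mk' x t ∈ map I
  have hmk : ∀ (x : R), x ∈ I → ∀ t : S,
      IsLocalization.mk' (Localization S) x t ∈ I.map (algebraMap R (Localization S)) := by
    intro x hx t
    rw [IsLocalization.mem_map_algebraMap_iff S]
    exact ⟨⟨⟨x, hx⟩, t⟩, IsLocalization.mk'_spec _ _ _⟩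
  constructor
  · intro htop
    have h1 : (1 : Localization S) ∈ I.map (algebraMap R (Localization S)) := by
      simp [htop]
    rw [IsLocalization.mem_map_algebraMap_iff S] at h1
    obtain ⟨⟨p, q⟩, hpq⟩ := h1
    rw [one_mul] at hpq
    rw [IsLocalization.eq_iff_exists S] at hpq
    obtain ⟨c, hc⟩ := hpq
    refine hdisj' (↑c * ↑q) ?_ (S.mul_mem c.2 q.2)
    rw [hc]
    exact I.mul_mem_left _ p.2
  · intro z w hzw
    obtain ⟨⟨a, t⟩, rfl⟩ := IsLocalization.mk'_surjective S z
    obtain ⟨⟨b, u⟩, rfl⟩ := IsLocalization.mk'_surjective S w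
    dsimp only at hzw ⊢
    rw [IsLocalization.mem_map_algebraMap_iff S] at hzw
    obtain ⟨⟨p, q⟩, hpq⟩ := hzw
    simp only at hpq
    have key : (algebraMap R (Localization S)) (a * b * ↑q)
        = (algebraMap R (Localization S)) (↑t * ↑u * ↑p) := by
      rw [map_mul, map_mul, map_mul, map_mul,
        ← IsLocalization.mk'_spec (Localization S) a t,
        ← IsLocalization.mk'_spec (Localization S) b u]
      linear_combination ((algebraMap R (Localization S)) ↑t *
        (algebraMap R (Localization S)) ↑u) * hpq
    rw [IsLocalization.eq_iff_exists S] at key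
    obtain ⟨c, hc⟩ := key
    have hab : (↑c * ↑q * a) * b ∈ I := by
      have : (c : R) * ((t : R) * (u : R) * (p : R)) ∈ I := I.mul_mem_left _ (I.mul_mem_left _ p.2)
      rw [← hc] at this
      convert this using 1; ring
    rcases hP _ _ hab with h | h
    · left
      have h' : s * ↑c * ↑q * a ∈ I := by
        have := h; rw [show s * (↑c * ↑q * a) = s * ↑c * ↑q * a by ring] at this; exact this
      have := hmk _ h' (⟨s, hs⟩ * c * q * t)
      rwa [show (s * ↑c * ↑q * a : R) = a * ↑(⟨s, hs⟩ * c * q : S) by push_cast; ring,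
        show (⟨s, hs⟩ * c * q * t : S) = t * (⟨s, hs⟩ * c * q) by rw [mul_comm],
        IsLocalization.mk'_cancel] at this
    · right
      have := hmk _ h (⟨s, hs⟩ * u)
      rwa [show (s * b : R) = b * ↑(⟨s, hs⟩ : S) by push_cast; ring,
        show ((⟨s, hs⟩ : S) * u) = u * ⟨s, hs⟩ by rw [mul_comm],
        IsLocalization.mk'_cancel] at this
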